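/- arXiv:1801.03765 — 7 statements merged into one kernel-verified Lean document; each statement's English description precedes it below -/
import Mathlib

section
/- Let A, B ∈ ℝ^{n×n} be monotone matrices, t > 0, and let H_t = (I + tB)^{−1}(I + tA)^{−1}(I + t²AB), assuming I+tA and I+tB are invertible. If λ ∈ ℂ is an eigenvalue of H_t with eigenvector z ∈ ℂ^n and λ ≠ 1, then setting c = Re⟨Bz, z⟩ / (t^{−1}‖z‖² + t‖Bz‖²) one has c ≥ 0 and |λ − 1/2| ≤ sqrt(1/4 − c/(1+2c)) ≤ 1/2; in particular λ lies in the closed disk of radius 1/2 centered at 1/2. -/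
open Matrix Complex

/-- Complexified monotonicity: a real monotone matrix has nonnegative real
part of the Hermitian quadratic form on complex vectors. -/
lemma DR_mono_complex {n : ℕ} (M : Matrix (Fin n) (Fin n) ℝ)
    (hM : ∀ x : Fin n → ℝ, 0 ≤ x ⬝ᵥ (M *ᵥ x)) (x : Fin n → ℂ) :
    0 ≤ ((M.map Complex.ofReal *ᵥ x) ⬝ᵥ star x).re := by
  have key : ((M.map Complex.ofReal *ᵥ x) ⬝ᵥ star x).re
      = (fun j => (x j).re) ⬝ᵥ (M *ᵥ fun j => (x j).re)
        + (fun j => (x j).im) ⬝ᵥ (M *ᵥ fun j => (x j).im) := by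
    simp only [dotProduct, mulVec, Matrix.map_apply, Pi.star_apply, Complex.re_sum,
      Complex.mul_re, Complex.mul_im, Complex.im_sum, Complex.ofReal_re, Complex.ofReal_im,
      Complex.star_def, Complex.conj_re, Complex.conj_im]
    rw [← Finset.sum_add_distrib]
    congr 1; funext j
    rw [Finset.sum_mul, Finset.sum_mul, Finset.mul_sum, Finset.mul_sum,
      ← Finset.sum_sub_distrib, ← Finset.sum_add_distrib]
    congr 1; funext k
    ring
  rw [key]
  exact add_nonneg (hM _) (hM _)

lemma DR_norm_sq_eq {n : ℕ} (v : Fin n → ℂ) :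
    ‖(WithLp.equiv 2 (Fin n → ℂ)).symm v‖ ^ 2 = ∑ j, Complex.normSq (v j) := by
  rw [EuclideanSpace.norm_eq, Real.sq_sqrt (by positivity)]
  congr 1; funext j
  rw [← Complex.sq_norm]
  rfl

/-- Eigenvalue localization for the Douglas–Rachford iteration matrix
`H_t = (I + tB)⁻¹ (I + tA)⁻¹ (I + t²AB)` of two monotone matrices. -/
theorem DR_eigenvalue_localization {n : ℕ}
    (A B : Matrix (Fin n) (Fin n) ℝ)
    (hA : ∀ x : Fin n → ℝ, 0 ≤ x ⬝ᵥ (A *ᵥ x))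
    (hB : ∀ x : Fin n → ℝ, 0 ≤ x ⬝ᵥ (B *ᵥ x))
    (t : ℝ) (ht : 0 < t)
    (hAinv : IsUnit (1 + t • A)) (hBinv : IsUnit (1 + t • B))
    (lam : ℂ) (z : Fin n → ℂ) (hz : z ≠ 0)
    (heig :
      ((1 + (t : ℂ) • B.map Complex.ofReal)⁻¹ *
        (1 + (t : ℂ) • A.map Complex.ofReal)⁻¹ *
        (1 + ((t : ℂ))^2 • (A.map Complex.ofReal * B.map Complex.ofReal))) *ᵥ z
        = lam • z)
    (hlam : lam ≠ 1)
    (c : ℝ)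
    (hc : c = (((B.map Complex.ofReal *ᵥ z) ⬝ᵥ star z).re) /
        (t⁻¹ * ‖(WithLp.equiv 2 (Fin n → ℂ)).symm z‖ ^ 2 +
          t * ‖(WithLp.equiv 2 (Fin n → ℂ)).symm (B.map Complex.ofReal *ᵥ z)‖ ^ 2)) :
    0 ≤ c ∧ ‖lam - 1/2‖ ≤ Real.sqrt (1/4 - c/(1 + 2*c)) ∧
      Real.sqrt (1/4 - c/(1 + 2*c)) ≤ 1/2 := by
  set A' := A.map Complex.ofReal with hA'def
  set B' := B.map Complex.ofReal with hB'def
  set w : Fin n → ℂ := B' *ᵥ z with hwdef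
  -- the key eigenvalue equation
  have keyeq : z + ((t:ℂ)^2) • (A' *ᵥ w)
      = lam • z + ((t:ℂ)*lam) • (A' *ᵥ z) + ((t:ℂ)*lam) • w
        + ((t:ℂ)^2*lam) • (A' *ᵥ w) := by
    have hmap : ∀ M : Matrix (Fin n) (Fin n) ℝ,
        (1 + t • M).map (Complex.ofRealHom : ℝ →+* ℂ) = 1 + (t:ℂ) • M.map Complex.ofReal := by
      intro M; ext i j
      simp [Matrix.map_apply, Matrix.one_apply, Matrix.add_apply, Matrix.smul_apply, apply_ite]
    have hAC : IsUnit (1 + (t:ℂ) • A') := by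
      have := hAinv.map (Complex.ofRealHom.mapMatrix)
      rwa [RingHom.mapMatrix_apply, hmap] at this
    have hBC : IsUnit (1 + (t:ℂ) • B') := by
      have := hBinv.map (Complex.ofRealHom.mapMatrix)
      rwa [RingHom.mapMatrix_apply, hmap] at this
    have hdA := (Matrix.isUnit_iff_isUnit_det _).mp hAC
    have hdB := (Matrix.isUnit_iff_isUnit_det _).mp hBC
    have cancel : ∀ (M : Matrix (Fin n) (Fin n) ℂ), IsUnit M.det → ∀ v : Fin n → ℂ,
        M *ᵥ (M⁻¹ *ᵥ v) = v := by
      intro M h v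
      rw [Matrix.mulVec_mulVec, Matrix.mul_nonsing_inv _ h, Matrix.one_mulVec]
    rw [← Matrix.mulVec_mulVec, ← Matrix.mulVec_mulVec] at heig
    have e1 : (1 + (t:ℂ) • A')⁻¹ *ᵥ ((1 + ((t:ℂ))^2 • (A' * B')) *ᵥ z)
        = lam • ((1 + (t:ℂ) • B') *ᵥ z) := by
      have h := congrArg (fun v => (1 + (t:ℂ) • B') *ᵥ v) heig
      simp only [cancel _ hdB, Matrix.mulVec_smul] at h
      exact h
    have e2 : (1 + ((t:ℂ))^2 • (A' * B')) *ᵥ z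
        = lam • ((1 + (t:ℂ) • A') *ᵥ ((1 + (t:ℂ) • B') *ᵥ z)) := by
      have h := congrArg (fun v => (1 + (t:ℂ) • A') *ᵥ v) e1
      simp only [cancel _ hdA, Matrix.mulVec_smul] at h
      exact h
    simp only [Matrix.add_mulVec, Matrix.one_mulVec, Matrix.smul_mulVec,
      Matrix.mulVec_add, Matrix.mulVec_smul, ← Matrix.mulVec_mulVec] at e2
    rw [e2]
    funext j
    simp only [Pi.add_apply, Pi.smul_apply, smul_eq_mul]
    ring
  -- the vector u and the A-monotonicity relation
  set u : Fin n → ℂ := lam • z - ((t:ℂ)*(1-lam)) • w with hudef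
  have hu : (t:ℂ) • (A' *ᵥ u) = (1-lam) • z - ((t:ℂ)*lam) • w := by
    rw [hudef, Matrix.mulVec_sub, Matrix.mulVec_smul, Matrix.mulVec_smul]
    funext j
    have h := congrFun keyeq j
    simp only [Pi.add_apply, Pi.smul_apply, Pi.sub_apply, smul_eq_mul] at h ⊢
    linear_combination -h
  -- the quadratic inequality from monotonicity of A
  have hAu : 0 ≤ ((A' *ᵥ u) ⬝ᵥ star u).re := DR_mono_complex A hA u
  have hmain0 : 0 ≤ ((((1-lam) • z - ((t:ℂ)*lam) • w) ⬝ᵥ star u)).re := by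
    have e : (((1-lam) • z - ((t:ℂ)*lam) • w) ⬝ᵥ star u)
        = (t:ℂ) * ((A' *ᵥ u) ⬝ᵥ star u) := by
      rw [← hu, smul_dotProduct]; simp [smul_eq_mul]
    rw [e]
    simp only [Complex.mul_re, Complex.ofReal_re, Complex.ofReal_im, zero_mul, sub_zero]
    exact mul_nonneg ht.le hAu
  -- abbreviations for scalar quantities
  set S : ℂ := w ⬝ᵥ star z with hSdef
  set p : ℝ := ∑ j, Complex.normSq (z j) with hpdef
  set q : ℝ := ∑ j, Complex.normSq (w j) with hqdef
  have hP : z ⬝ᵥ star z = (p : ℂ) := by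
    rw [hpdef]; push_cast; simp [dotProduct, Complex.mul_conj]
  have hQ : w ⬝ᵥ star w = (q : ℂ) := by
    rw [hqdef]; push_cast; simp [dotProduct, Complex.mul_conj]
  have hZW : z ⬝ᵥ star w = (starRingEnd ℂ) S := by
    rw [hSdef]; simp [dotProduct, map_sum, mul_comm]
  -- expand the quadratic form
  have hD : (((1-lam) • z - ((t:ℂ)*lam) • w) ⬝ᵥ star u)
      = (1-lam) * (starRingEnd ℂ) lam * (p:ℂ)
        - (1-lam) * ((t:ℂ) * (starRingEnd ℂ) (1-lam)) * ((starRingEnd ℂ) S)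
        - (t:ℂ)*lam*(starRingEnd ℂ) lam * S
        + (t:ℂ)*lam*((t:ℂ)*(starRingEnd ℂ) (1-lam)) * (q:ℂ) := by
    rw [hudef]
    simp only [star_sub, star_smul, sub_dotProduct, dotProduct_sub,
      smul_dotProduct, dotProduct_smul, smul_eq_mul, hP, hQ, hZW,
      Complex.star_def, _root_.map_mul, map_sub, map_add, map_neg, _root_.map_one,
      Complex.conj_ofReal, ← hSdef]
    ring
  rw [hD] at hmain0
  -- convert to a real inequality
  have hre : 0 ≤ (lam.re - lam.re^2 - lam.im^2) * (p + t^2*q)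
      - t * ((1-lam.re)^2 + lam.im^2 + lam.re^2 + lam.im^2) * S.re := by
    simp only [Complex.add_re, Complex.sub_re, Complex.mul_re, Complex.mul_im,
      Complex.sub_im, Complex.one_re, Complex.one_im, Complex.conj_re, Complex.conj_im,
      Complex.ofReal_re, Complex.ofReal_im] at hmain0
    nlinarith [hmain0]
  have hsr : 0 ≤ S.re := DR_mono_complex B hB z
  have hp0 : 0 < p := by
    obtain ⟨j, hj⟩ := Function.ne_iff.mp hz
    exact Finset.sum_pos' (fun i _ => Complex.normSq_nonneg _)
      ⟨j, Finset.mem_univ j, by simpa using Complex.normSq_pos.mpr hj⟩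
  have hq0 : 0 ≤ q := Finset.sum_nonneg fun i _ => Complex.normSq_nonneg _
  -- identify c
  have hceq : c = S.re / (t⁻¹ * p + t * q) := by
    rw [hc, DR_norm_sq_eq, DR_norm_sq_eq]
  set d : ℝ := t⁻¹ * p + t * q with hddef
  have hd0 : 0 < d := by
    rw [hddef]
    have h1 : 0 < t⁻¹ * p := mul_pos (inv_pos.mpr ht) hp0
    have h2 : 0 ≤ t * q := mul_nonneg ht.le hq0
    linarith
  have hc0 : 0 ≤ c := by
    rw [hceq]; exact div_nonneg hsr hd0.le
  have hcd : S.re = c * d := by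
    rw [hceq, div_mul_cancel₀ _ hd0.ne']
  have htd : p + t^2*q = t * d := by
    rw [hddef]; field_simp
  -- the core bound : c/(1+2c) ≤ lam.re - |lam|²
  have h12c : 0 < 1 + 2*c := by linarith
  have htd0 : 0 < t * d := mul_pos ht hd0
  have hR : c / (1 + 2*c) ≤ lam.re - lam.re^2 - lam.im^2 := by
    rw [div_le_iff₀ h12c]
    set R : ℝ := lam.re - lam.re^2 - lam.im^2 with hRdef
    have hre2 : 0 ≤ (t*d) * (R - (1-2*R)*c) := by
      have e : (t*d) * (R - (1-2*R)*c)
          = R*(p + t^2*q) - t*((1-lam.re)^2 + lam.im^2 + lam.re^2 + lam.im^2)*S.re := by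
        rw [htd, hcd, hRdef]; ring
      rw [e]; exact hre
    have h3 : 0 ≤ R - (1-2*R)*c := by
      by_contra h
      push_neg at h
      nlinarith [htd0, hre2]
    nlinarith [h3]
  have hns : Complex.normSq (lam - 1/2) = 1/4 - (lam.re - lam.re^2 - lam.im^2) := by
    simp [Complex.normSq_apply, Complex.sub_re, Complex.sub_im]
    norm_num
    ring
  refine ⟨hc0, ?_, ?_⟩
  · rw [Complex.norm_def]
    apply Real.sqrt_le_sqrt
    rw [hns]
    linarith [hR]
  · have : 1/4 - c/(1 + 2*c) ≤ (1/4 : ℝ) := by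
      have : 0 ≤ c / (1+2*c) := div_nonneg hc0 h12c.le
      linarith
    calc Real.sqrt (1/4 - c/(1 + 2*c)) ≤ Real.sqrt (1/4) := Real.sqrt_le_sqrt this
      _ = 1/2 := by
          rw [show (1/4:ℝ) = (1/2)^2 by norm_num, Real.sqrt_sq (by norm_num)]
end

section
/- Let A, B ∈ ℝ^{n×n} be monotone matrices and t > 0 such that I + tA and I + tB are invertible. Then the eigenspace of the Douglas–Rachford iteration matrix H_t = (I + tB)^{−1}(I + tA)^{−1}(I + t²AB) for the eigenvalue 1 equals the kernel of A + B; i.e., H_t x = x if and only if (A + B)x = 0. -/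
open Matrix

/-- The eigenspace of the Douglas–Rachford iteration matrix
`H_t = (I + tB)⁻¹ (I + tA)⁻¹ (I + t²AB)` for the eigenvalue `1` is `ker (A + B)`. -/
theorem DR_fixed_points_eq_ker {n : ℕ}
    (A B : Matrix (Fin n) (Fin n) ℝ)
    (hA : ∀ x : Fin n → ℝ, 0 ≤ x ⬝ᵥ (A *ᵥ x))
    (hB : ∀ x : Fin n → ℝ, 0 ≤ x ⬝ᵥ (B *ᵥ x))
    (t : ℝ) (ht : 0 < t)
    (hAinv : IsUnit (1 + t • A)) (hBinv : IsUnit (1 + t • B))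
    (x : Fin n → ℝ) :
    ((1 + t • B)⁻¹ * (1 + t • A)⁻¹ * (1 + t^2 • (A * B))) *ᵥ x = x ↔
      (A + B) *ᵥ x = 0 := by
  obtain ⟨C, hC⟩ : ∃ C, C = 1 + t^2 • (A * B) := ⟨_, rfl⟩
  obtain ⟨M, hMdef⟩ : ∃ M, M = (1 + t • A) * (1 + t • B) := ⟨_, rfl⟩
  rw [← hC]
  have hdA : IsUnit (1 + t • A).det := (Matrix.isUnit_iff_isUnit_det _).mp hAinv
  have hdB : IsUnit (1 + t • B).det := (Matrix.isUnit_iff_isUnit_det _).mp hBinv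
  have hAA : (1 + t • A)⁻¹ * (1 + t • A) = 1 := Matrix.nonsing_inv_mul _ hdA
  have hBB : (1 + t • B)⁻¹ * (1 + t • B) = 1 := Matrix.nonsing_inv_mul _ hdB
  have hAA' : (1 + t • A) * (1 + t • A)⁻¹ = 1 := Matrix.mul_nonsing_inv _ hdA
  have hBB' : (1 + t • B) * (1 + t • B)⁻¹ = 1 := Matrix.mul_nonsing_inv _ hdB
  have key : M * ((1 + t • B)⁻¹ * (1 + t • A)⁻¹ * C) = C := by
    rw [hMdef, mul_assoc (1 + t • A) (1 + t • B), mul_assoc ((1 + t • B)⁻¹),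
      ← mul_assoc (1 + t • B), hBB', one_mul, ← mul_assoc, hAA', one_mul]
  have key2 : (1 + t • B)⁻¹ * (1 + t • A)⁻¹ * M = 1 := by
    rw [hMdef, mul_assoc, ← mul_assoc ((1 + t • A)⁻¹), hAA, one_mul, hBB]
  have hM : M = C + t • (A + B) := by
    simp only [hMdef, hC, mul_add, add_mul, mul_one, one_mul, smul_mul_smul_comm,
      smul_add]
    rw [← sq]
    abel
  constructor
  · intro h
    have h2 := congrArg (fun v => M *ᵥ v) h
    simp only [Matrix.mulVec_mulVec, key] at h2
    -- h2 : C *ᵥ x = M *ᵥ x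
    rw [hM, Matrix.add_mulVec, left_eq_add, Matrix.smul_mulVec,
      smul_eq_zero] at h2
    exact h2.resolve_left ht.ne'
  · intro h
    have hCM : C *ᵥ x = M *ᵥ x := by
      rw [hM, Matrix.add_mulVec, Matrix.smul_mulVec, h, smul_zero, add_zero]
    calc ((1 + t • B)⁻¹ * (1 + t • A)⁻¹ * C) *ᵥ x
        = ((1 + t • B)⁻¹ * (1 + t • A)⁻¹) *ᵥ (C *ᵥ x) := by
          rw [Matrix.mulVec_mulVec]
      _ = ((1 + t • B)⁻¹ * (1 + t • A)⁻¹ * M) *ᵥ x := by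
          rw [hCM, Matrix.mulVec_mulVec]
      _ = x := by rw [key2, Matrix.one_mulVec]
end

section
/- Let A, B ∈ ℝ^{n×n}, t > 0, with I + tA and I + tB invertible. Define H_t = (I + tB)^{−1}(I + tA)^{−1}(I + t²AB) and F_t = J_{tA}(2J_{tB} − I) − J_{tB} + I where J_{tA} = (I+tA)^{−1}, J_{tB} = (I+tB)^{−1}. Then F_t = (I + tB) H_t (I + tB)^{−1}; in particular F_t and H_t are similar matrices and have the same eigenvalues. -/
open Matrix

/-- The two Douglas–Rachford iteration matrices `F_t` and `H_t` are similar: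
`F_t = (I + tB) H_t (I + tB)⁻¹`. -/
theorem DR_iteration_matrices_similar {n : ℕ}
    (A B : Matrix (Fin n) (Fin n) ℝ) (t : ℝ) (ht : 0 < t)
    (hAinv : IsUnit (1 + t • A)) (hBinv : IsUnit (1 + t • B)) :
    (1 + t • A)⁻¹ * (2 * (1 + t • B)⁻¹ - 1) - (1 + t • B)⁻¹ + 1 =
      (1 + t • B) * ((1 + t • B)⁻¹ * (1 + t • A)⁻¹ * (1 + t^2 • (A * B))) *
        (1 + t • B)⁻¹ := by
  set P := 1 + t • A with hP
  set Q := 1 + t • B with hQ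
  have hPd : IsUnit P.det := (Matrix.isUnit_iff_isUnit_det _).mp hAinv
  have hQd : IsUnit Q.det := (Matrix.isUnit_iff_isUnit_det _).mp hBinv
  have hP1 : P * P⁻¹ = 1 := Matrix.mul_nonsing_inv _ hPd
  have hP2 : P⁻¹ * P = 1 := Matrix.nonsing_inv_mul _ hPd
  have hQ1 : Q * Q⁻¹ = 1 := Matrix.mul_nonsing_inv _ hQd
  have hQ2 : Q⁻¹ * Q = 1 := Matrix.nonsing_inv_mul _ hQd
  have hX : (1 : Matrix (Fin n) (Fin n) ℝ) + t^2 • (A * B) = 2 - Q - P + P * Q := by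
    rw [hP, hQ]
    simp [mul_add, add_mul, Matrix.smul_mul, Matrix.mul_smul, smul_smul, pow_two]
    rw [show (2 : Matrix (Fin n) (Fin n) ℝ) = 1 + 1 from one_add_one_eq_two.symm]
    abel
  rw [hX]
  have hRHS : Q * (Q⁻¹ * P⁻¹ * (2 - Q - P + P * Q)) * Q⁻¹
      = P⁻¹ * (2 - Q - P + P * Q) * Q⁻¹ := by
    rw [← Matrix.mul_assoc, ← Matrix.mul_assoc, hQ1, Matrix.one_mul]
  rw [hRHS]
  have expand : P⁻¹ * (2 - Q - P + P * Q) * Q⁻¹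
      = 2 * (P⁻¹ * Q⁻¹) - P⁻¹ * (Q * Q⁻¹) - (P⁻¹ * P) * Q⁻¹ + (P⁻¹ * P) * (Q * Q⁻¹) := by
    noncomm_ring
  rw [expand, hP2, hQ1]
  have lhs_eq : P⁻¹ * (2 * Q⁻¹ - 1) - Q⁻¹ + 1
      = 2 * (P⁻¹ * Q⁻¹) - P⁻¹ * 1 - 1 * Q⁻¹ + 1 * 1 := by
    noncomm_ring
  rw [lhs_eq]
end

section
/- Let {α_n}, {β_n}, {ω_n} be nonnegative real sequences and {τ_n} a sequence with 0 < τ̲ ≤ τ_n ≤ τ̄ for all n, |τ_n − τ_{n+1}| ≤ ω_n for all n, and Σ_{n=0}^∞ ω_n < ∞. If α_{n−1} + τ_n β_{n−1} ≥ α_n + τ_n β_n for all n ≥ 1, then the sequences {α_n} and {β_n} are bounded. -/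
/-- Lemma 2: boundedness of sequences satisfying a perturbed monotonicity relation. -/
theorem bounded_of_perturbed_descent
    (α β ω τ : ℕ → ℝ)
    (hα : ∀ n, 0 ≤ α n) (hβ : ∀ n, 0 ≤ β n) (hω : ∀ n, 0 ≤ ω n)
    (τlo τhi : ℝ) (hτlo : 0 < τlo)
    (hτ : ∀ n, τlo ≤ τ n ∧ τ n ≤ τhi)
    (hτω : ∀ n, |τ n - τ (n+1)| ≤ ω n)
    (hsum : Summable ω)
    (hdesc : ∀ n, α (n+1) + τ (n+1) * β (n+1) ≤ α n + τ (n+1) * β n) :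
    (∃ M : ℝ, ∀ n, α n ≤ M) ∧ (∃ M : ℝ, ∀ n, β n ≤ M) := by
  set E : ℕ → ℝ := fun n => α n + τ n * β n with hE
  have hτpos : ∀ n, 0 < τ n := fun n => lt_of_lt_of_le hτlo (hτ n).1
  have hEnn : ∀ n, 0 ≤ E n := fun n =>
    add_nonneg (hα n) (mul_nonneg (hτpos n).le (hβ n))
  have hβE : ∀ n, β n ≤ E n / τlo := by
    intro n
    rw [le_div_iff₀ hτlo]
    have h1 : τlo * β n ≤ τ n * β n :=
      mul_le_mul_of_nonneg_right (hτ n).1 (hβ n)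
    have h2 : τ n * β n ≤ E n := le_add_of_nonneg_left (hα n)
    nlinarith
  have hstep : ∀ n, E (n+1) ≤ (1 + ω n / τlo) * E n := by
    intro n
    have h2 := hdesc n
    have h3 : (τ (n+1) - τ n) * β n ≤ ω n * β n := by
      apply mul_le_mul_of_nonneg_right _ (hβ n)
      calc τ (n+1) - τ n ≤ |τ (n+1) - τ n| := le_abs_self _
        _ = |τ n - τ (n+1)| := abs_sub_comm _ _
        _ ≤ ω n := hτω n
    have h4 : ω n * β n ≤ ω n * (E n / τlo) :=
      mul_le_mul_of_nonneg_left (hβE n) (hω n)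
    have h5 : ω n * (E n / τlo) = ω n / τlo * E n := by ring
    simp only [hE]
    nlinarith [hEnn n]
  have hexp : ∀ n, (1 + ω n / τlo) ≤ Real.exp (ω n / τlo) := by
    intro n
    have := Real.add_one_le_exp (ω n / τlo)
    linarith
  have hbound : ∀ n, E n ≤ E 0 * Real.exp ((∑ k ∈ Finset.range n, ω k) / τlo) := by
    intro n
    induction n with
    | zero => simp
    | succ n ih =>
      have h6 : E (n+1) ≤ (1 + ω n / τlo) * E n := hstep n
      have h7 : (1 + ω n / τlo) * E n ≤ Real.exp (ω n / τlo) * E n :=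
        mul_le_mul_of_nonneg_right (hexp n) (hEnn n)
      have h8 : Real.exp (ω n / τlo) * E n ≤
          Real.exp (ω n / τlo) * (E 0 * Real.exp ((∑ k ∈ Finset.range n, ω k) / τlo)) :=
        mul_le_mul_of_nonneg_left ih (Real.exp_pos _).le
      have h9 : Real.exp (ω n / τlo) * (E 0 * Real.exp ((∑ k ∈ Finset.range n, ω k) / τlo))
          = E 0 * Real.exp ((∑ k ∈ Finset.range (n+1), ω k) / τlo) := by
        rw [Finset.sum_range_succ, add_div, Real.exp_add]
        ring
      linarith
  set T : ℝ := ∑' k, ω k with hT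
  have hsumle : ∀ n, (∑ k ∈ Finset.range n, ω k) ≤ T := fun n =>
    Summable.sum_le_tsum _ (fun i _ => hω i) hsum
  have hEb : ∀ n, E n ≤ E 0 * Real.exp (T / τlo) := by
    intro n
    refine (hbound n).trans ?_
    apply mul_le_mul_of_nonneg_left _ (hEnn 0)
    exact Real.exp_le_exp.mpr (div_le_div_of_nonneg_right (hsumle n) hτlo.le)
  constructor
  · exact ⟨E 0 * Real.exp (T / τlo), fun n =>
      le_trans (le_add_of_nonneg_right (mul_nonneg (hτpos n).le (hβ n))) (hEb n)⟩
  · refine ⟨E 0 * Real.exp (T / τlo) / τlo, fun n => ?_⟩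
    exact (hβE n).trans (div_le_div_of_nonneg_right (hEb n) hτlo.le)
end

section
/- Let A, B be maximally monotone operators on a Hilbert space H and consider non-stationary Douglas–Rachford iterates satisfying aⁿ ∈ A(vⁿ), vⁿ + t_n aⁿ = u^{n−1} − t_n b^{n−1}, bⁿ ∈ B(uⁿ), uⁿ + t_n bⁿ = vⁿ + t_n b^{n−1}. Then for every (u, b) in the extended solution set S(A,B) = {(z,w) : w ∈ B(z), −w ∈ A(z)} and every n ≥ 1: ‖u^{n−1} − u‖² + t_n²‖b^{n−1} − b‖² ≥ ‖uⁿ − u‖² + t_n²‖bⁿ − b‖² + ‖uⁿ − vⁿ + t_n(bⁿ + aⁿ)‖². -/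
open RealInnerProductSpace

def MonotoneOp {H : Type*} [NormedAddCommGroup H] [InnerProductSpace ℝ H]
    (A : H → Set H) : Prop :=
  ∀ x y u v, u ∈ A x → v ∈ A y → (0 : ℝ) ≤ ⟪u - v, x - y⟫

def MaximalMonotoneOp {H : Type*} [NormedAddCommGroup H] [InnerProductSpace ℝ H]
    (A : H → Set H) : Prop :=
  MonotoneOp A ∧ ∀ x u, (∀ y v, v ∈ A y → (0 : ℝ) ≤ ⟪u - v, x - y⟫) → u ∈ A x

/-- Fejér-type inequality for the non-stationary Douglas–Rachford iterates with
respect to points of the extended solution set `S(A,B)`. -/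
theorem nonstationary_DR_fejer
    {H : Type*} [NormedAddCommGroup H] [InnerProductSpace ℝ H] [CompleteSpace H]
    (A B : H → Set H) (hA : MaximalMonotoneOp A) (hB : MaximalMonotoneOp B)
    (t : ℕ → ℝ) (ht : ∀ n, 0 < t n)
    (u v a b : ℕ → H)
    (ha : ∀ n, a (n+1) ∈ A (v (n+1)))
    (hva : ∀ n, v (n+1) + t (n+1) • a (n+1) = u n - t (n+1) • b n)
    (hb : ∀ n, b (n+1) ∈ B (u (n+1)))
    (hub : ∀ n, u (n+1) + t (n+1) • b (n+1) = v (n+1) + t (n+1) • b n)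
    (us bs : H) (hbs : bs ∈ B us) (has : -bs ∈ A us) :
    ∀ n,
      ‖u (n+1) - us‖^2 + (t (n+1))^2 * ‖b (n+1) - bs‖^2 +
          ‖u (n+1) - v (n+1) + t (n+1) • (b (n+1) + a (n+1))‖^2 ≤
        ‖u n - us‖^2 + (t (n+1))^2 * ‖b n - bs‖^2 := by
  intro n
  have hTpos := ht (n+1)
  have h1 : (0:ℝ) ≤ ⟪a (n+1) - -bs, v (n+1) - us⟫ := hA.1 _ _ _ _ (ha n) has
  have h2 : (0:ℝ) ≤ ⟪b (n+1) - bs, u (n+1) - us⟫ := hB.1 _ _ _ _ (hb n) hbs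
  have e1 : u n = v (n+1) + t (n+1) • a (n+1) + t (n+1) • b n := by
    have h := hva n
    rw [eq_sub_iff_add_eq] at h
    exact h.symm
  have e2 : u (n+1) = v (n+1) + t (n+1) • b n - t (n+1) • b (n+1) :=
    eq_sub_of_add_eq (hub n)
  rw [e2] at h2
  rw [e1, e2]
  simp only [← real_inner_self_eq_norm_sq] at h1 h2 ⊢
  simp only [inner_add_left, inner_add_right, inner_sub_left, inner_sub_right,
    real_inner_smul_left, real_inner_smul_right, inner_neg_left, inner_neg_right] at h1 h2 ⊢
  nlinarith [mul_nonneg hTpos.le h1, mul_nonneg hTpos.le h2,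
    real_inner_comm (v (n+1)) (a (n+1)), real_inner_comm (v (n+1)) (b n),
    real_inner_comm (v (n+1)) (b (n+1)), real_inner_comm (v (n+1)) us,
    real_inner_comm (v (n+1)) bs, real_inner_comm (a (n+1)) (b n),
    real_inner_comm (a (n+1)) (b (n+1)), real_inner_comm (a (n+1)) us,
    real_inner_comm (a (n+1)) bs, real_inner_comm (b n) (b (n+1)),
    real_inner_comm (b n) us, real_inner_comm (b n) bs,
    real_inner_comm (b (n+1)) us, real_inner_comm (b (n+1)) bs,
    real_inner_comm us bs]
end

section
/- Let A, B be maximally monotone operators on a real Hilbert space H and {t_n} a positive sequence with 0 < t̲ ≤ t_n ≤ t̄, Σ_{n}|t_n − t_{n+1}| < ∞ (hence t_n → t* > 0). Then the sequence {(uⁿ, bⁿ)} generated by the non-stationary Douglas–Rachford iteration aⁿ ∈ A(vⁿ), vⁿ + t_n aⁿ = u^{n−1} − t_n b^{n−1}, bⁿ ∈ B(uⁿ), uⁿ + t_n bⁿ = vⁿ + t_n b^{n−1} converges weakly to some (u*, b*) in the extended solution set S(A,B) = {(z,w) : w ∈ B(z), −w ∈ A(z)}; in particular 0 ∈ (A +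 B)(u*). -/
open RealInnerProductSpace Filter

section DRAux
variable {H : Type*} [NormedAddCommGroup H] [InnerProductSpace ℝ H]

lemma bdd_ultrafilter_limit (g : ℕ → ℝ) (c : ℝ) (h : ∀ n, |g n| ≤ c)
    (U : Ultrafilter ℕ) : ∃ x, Tendsto g (U : Filter ℕ) (nhds x) := by
  have hmem : (Ultrafilter.map g U : Filter ℝ) ≤ Filter.principal (Set.Icc (-c) c) := by
    rw [Ultrafilter.coe_map, Filter.le_principal_iff, Filter.mem_map]
    refine Filter.univ_mem' (fun n => ?_)
    exact abs_le.mp (h n)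
  obtain ⟨x, -, hx⟩ := isCompact_Icc.ultrafilter_le_nhds (Ultrafilter.map g U) hmem
  exact ⟨x, by rwa [Ultrafilter.coe_map] at hx⟩

lemma weak_limit_of_bounded [CompleteSpace H] (x : ℕ → H) (C : ℝ) (hC : ∀ n, ‖x n‖ ≤ C)
    (U : Ultrafilter ℕ) :
    ∃ L : H, ∀ w : H, Tendsto (fun n => ⟪x n, w⟫) (U : Filter ℕ) (nhds ⟪L, w⟫) := by
  have key : ∀ w : H, ∃ r, Tendsto (fun n => ⟪x n, w⟫) (U : Filter ℕ) (nhds r) := by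
    intro w
    refine bdd_ultrafilter_limit _ (C * ‖w‖) (fun n => ?_) U
    calc |⟪x n, w⟫| ≤ ‖x n‖ * ‖w‖ := abs_real_inner_le_norm _ _
    _ ≤ C * ‖w‖ := mul_le_mul_of_nonneg_right (hC n) (norm_nonneg w)
  choose ℓ hℓ using key
  have hadd : ∀ w₁ w₂, ℓ (w₁ + w₂) = ℓ w₁ + ℓ w₂ := by
    intro w₁ w₂
    refine tendsto_nhds_unique (hℓ _) ?_
    simpa only [inner_add_right] using (hℓ w₁).add (hℓ w₂)
  have hsmul : ∀ (c : ℝ) w, ℓ (c • w) = c * ℓ w := by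
    intro c w
    refine tendsto_nhds_unique (hℓ _) ?_
    simpa only [inner_smul_right] using (hℓ w).const_mul c
  have hbound : ∀ w, ‖ℓ w‖ ≤ C * ‖w‖ := by
    intro w
    rw [Real.norm_eq_abs, abs_le]
    have hub : ∀ n, |⟪x n, w⟫| ≤ C * ‖w‖ := fun n =>
      le_trans (abs_real_inner_le_norm _ _) (mul_le_mul_of_nonneg_right (hC n) (norm_nonneg w))
    exact ⟨ge_of_tendsto' (hℓ w) (fun n => (abs_le.mp (hub n)).1),
      le_of_tendsto' (hℓ w) (fun n => (abs_le.mp (hub n)).2)⟩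
  let f : H →ₗ[ℝ] ℝ := { toFun := ℓ, map_add' := hadd, map_smul' := hsmul }
  let fc : H →L[ℝ] ℝ := f.mkContinuous C hbound
  refine ⟨(InnerProductSpace.toDual ℝ H).symm fc, fun w => ?_⟩
  have : ⟪(InnerProductSpace.toDual ℝ H).symm fc, w⟫ = fc w := by
    rw [← InnerProductSpace.toDual_apply_apply, LinearIsometryEquiv.apply_symm_apply]
  rw [this]
  exact hℓ w

lemma dr_key_identity (e α β f : H) (tt : ℝ) :
    ‖e - tt • (α + β)‖ ^ 2 + tt ^ 2 * ‖β‖ ^ 2 + ‖tt • (α + f)‖ ^ 2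
      + 2 * tt * ⟪α, e - tt • (α + f)⟫ + 2 * tt * ⟪β, e - tt • (α + β)⟫
      = ‖e‖ ^ 2 + tt ^ 2 * ‖f‖ ^ 2 := by
  simp only [← real_inner_self_eq_norm_sq, inner_sub_left, inner_sub_right, inner_add_left,
    inner_add_right, real_inner_smul_left, real_inner_smul_right]
  rw [real_inner_comm β α, real_inner_comm e α, real_inner_comm e β, real_inner_comm f α]
  ring

lemma quasi_fejer (V ε : ℕ → ℝ) (hV : ∀ n, 0 ≤ V n) (hε : ∀ n, 0 ≤ ε n)
    (hsum : Summable ε) (hrec : ∀ n, V (n + 1) ≤ V n + ε n) :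
    ∃ L, Tendsto V atTop (nhds L) := by
  set T : ℕ → ℝ := fun n => ∑' k, ε (n + k) with hT
  have hsh : ∀ n, Summable (fun k => ε (n + k)) := by
    intro n
    have := (summable_nat_add_iff n).mpr hsum
    simpa [add_comm] using this
  have hTrec : ∀ n, T n = ε n + T (n + 1) := by
    intro n
    have h0 := Summable.tsum_eq_zero_add (hsh n)
    simpa [hT, add_comm, add_assoc, add_left_comm] using h0
  have hTnn : ∀ n, 0 ≤ T n := fun n => tsum_nonneg (fun k => hε _)
  have hanti : Antitone (fun n => V n + T n) := by
    refine antitone_nat_of_succ_le (fun n => ?_)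
    have h1 := hrec n
    have h2 := hTrec n
    show V (n + 1) + T (n + 1) ≤ V n + T n
    linarith
  have hbdd : BddBelow (Set.range (fun n => V n + T n)) := by
    refine ⟨0, fun x hx => ?_⟩
    obtain ⟨n, rfl⟩ := hx
    exact add_nonneg (hV n) (hTnn n)
  have hW := tendsto_atTop_ciInf hanti hbdd
  have hT0 : Tendsto T atTop (nhds 0) := by
    have := tendsto_sum_nat_add ε
    simpa [hT, add_comm] using this
  refine ⟨(⨅ i, V i + T i) - 0, ?_⟩
  have := hW.sub hT0
  simpa using this

lemma lyapunov_real (V P δ : ℕ → ℝ) (c : ℝ) (hc : 0 ≤ c)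
    (hV : ∀ n, 0 ≤ V n) (hP : ∀ n, 0 ≤ P n) (hδ : ∀ n, 0 ≤ δ n)
    (hsumδ : Summable δ)
    (hstep : ∀ n, V (n+1) + P n ≤ V n + c * δ n * V n) :
    (∃ M, ∀ n, V n ≤ M) ∧ Summable P ∧ ∃ L, Tendsto V atTop (nhds L) := by
  set D := ∑' n, δ n with hD
  have hDnn : 0 ≤ D := tsum_nonneg hδ
  set M := V 0 * Real.exp (c * D) with hM
  have hSle : ∀ n, ∑ k ∈ Finset.range n, δ k ≤ D :=
    fun n => Summable.sum_le_tsum (Finset.range n) (fun i _ => hδ i) hsumδ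
  have hbound : ∀ n, V n ≤ V 0 * Real.exp (c * ∑ k ∈ Finset.range n, δ k) := by
    intro n
    induction n with
    | zero => simp
    | succ n ih =>
      have h1 : V (n+1) ≤ V n * (1 + c * δ n) := by
        have := hstep n; have := hP n; nlinarith
      have h2 : V n * (1 + c * δ n) ≤ (V 0 * Real.exp (c * ∑ k ∈ Finset.range n, δ k)) * (1 + c * δ n) := by
        have hpos : (0:ℝ) ≤ 1 + c * δ n := by nlinarith [mul_nonneg hc (hδ n)]
        exact mul_le_mul_of_nonneg_right ih hpos
      have h3 : (V 0 * Real.exp (c * ∑ k ∈ Finset.range n, δ k)) * (1 + c * δ n)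
          ≤ (V 0 * Real.exp (c * ∑ k ∈ Finset.range n, δ k)) * Real.exp (c * δ n) := by
        have := Real.add_one_le_exp (c * δ n)
        have hnn : (0:ℝ) ≤ V 0 * Real.exp (c * ∑ k ∈ Finset.range n, δ k) :=
          mul_nonneg (hV 0) (Real.exp_pos _).le
        nlinarith
      have h4 : (V 0 * Real.exp (c * ∑ k ∈ Finset.range n, δ k)) * Real.exp (c * δ n)
          = V 0 * Real.exp (c * ∑ k ∈ Finset.range (n+1), δ k) := by
        rw [mul_assoc, ← Real.exp_add, Finset.sum_range_succ, mul_add]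
      linarith
  have hVM : ∀ n, V n ≤ M := by
    intro n
    refine le_trans (hbound n) ?_
    rw [hM]
    have : Real.exp (c * ∑ k ∈ Finset.range n, δ k) ≤ Real.exp (c * D) :=
      Real.exp_le_exp.mpr (mul_le_mul_of_nonneg_left (hSle n) hc)
    nlinarith [hV 0]
  set ε : ℕ → ℝ := fun n => c * M * δ n with hε
  have hεnn : ∀ n, 0 ≤ ε n := by
    intro n
    have hMnn : 0 ≤ M := le_trans (hV 0) (hVM 0)
    exact mul_nonneg (mul_nonneg hc hMnn) (hδ n)
  have hsumε : Summable ε := hsumδ.mul_left _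
  have hrec : ∀ n, V (n+1) + P n ≤ V n + ε n := by
    intro n
    have h0 := hstep n
    have h1 : c * δ n * V n ≤ c * M * δ n := by
      have h2 := mul_le_mul_of_nonneg_left (hVM n) (mul_nonneg hc (hδ n))
      calc c * δ n * V n = (c * δ n) * V n := by ring
      _ ≤ (c * δ n) * M := h2
      _ = c * M * δ n := by ring
    simp only [hε]
    linarith
  have hsumP : Summable P := by
    have hpartial : ∀ n, ∑ k ∈ Finset.range n, P k ≤ V 0 + ∑' k, ε k := by
      intro n
      have key : ∀ n, ∑ k ∈ Finset.range n, P k + V n ≤ V 0 + ∑ k ∈ Finset.range n, ε k := by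
        intro n
        induction n with
        | zero => simp
        | succ n ih =>
          rw [Finset.sum_range_succ, Finset.sum_range_succ]
          have := hrec n
          linarith
      have h1 := key n
      have h2 := Summable.sum_le_tsum (Finset.range n) (fun i _ => hεnn i) hsumε
      have := hV n
      linarith
    exact summable_of_sum_range_le hP hpartial
  refine ⟨⟨M, hVM⟩, hsumP, ?_⟩
  exact quasi_fejer V ε hV hεnn hsumε (fun n => by have := hrec n; have := hP n; linarith)

lemma star_ineq (A B : H → Set H) (hA : MaximalMonotoneOp A) (hB : MaximalMonotoneOp B)
    (t : ℕ → ℝ) (tlo : ℝ) (htlo : 0 < tlo) (hblo : ∀ n, tlo ≤ t n)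
    (u v a b : ℕ → H)
    (ha : ∀ n, a (n+1) ∈ A (v (n+1)))
    (hva : ∀ n, v (n+1) + t (n+1) • a (n+1) = u n - t (n+1) • b n)
    (hb : ∀ n, b (n+1) ∈ B (u (n+1)))
    (hub : ∀ n, u (n+1) + t (n+1) • b (n+1) = v (n+1) + t (n+1) • b n)
    (z w : H) (hzB : w ∈ B z) (hzA : -w ∈ A z) (n : ℕ) :
    ‖u (n+1) - z‖^2 + (t (n+1))^2 * ‖b (n+1) - w‖^2 + ‖u n - v (n+1)‖^2
      ≤ ‖u n - z‖^2 + (t (n+1))^2 * ‖b n - w‖^2 := by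
  set tt := t (n+1) with htt
  have httpos : 0 < tt := lt_of_lt_of_le htlo (hblo (n+1))
  set e := u n - z with he
  set α := a (n+1) + w with hα
  set β := b (n+1) - w with hβ
  set f := b n - w with hf
  have hab : a (n+1) + b (n+1) = α + β := by rw [hα, hβ]; abel
  have haf : a (n+1) + b n = α + f := by rw [hα, hf]; abel
  have hu' : u (n+1) = u n - tt • (a (n+1) + b (n+1)) := by
    have h1 := hva n
    have h2 := hub n
    rw [smul_add]
    rw [← htt] at h1 h2
    have hv' : v (n+1) = u n - tt • b n - tt • a (n+1) := by rw [← h1]; abel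
    have : u (n+1) + tt • b (n+1) = u n - tt • a (n+1) := by
      rw [h2, hv']; abel
    have := congrArg (fun x => x - tt • b (n+1)) this
    simpa [sub_sub] using this
  have he' : u (n+1) - z = e - tt • (α + β) := by rw [hu', ← hab, he]; abel
  have hP : u n - v (n+1) = tt • (α + f) := by
    have h1 := hva n
    rw [← htt] at h1
    rw [← haf, smul_add]
    rw [eq_comm]
    calc tt • a (n+1) + tt • b n = u n - (u n - tt • b n) + tt • a (n+1) := by abel
    _ = u n - (v (n+1) + tt • a (n+1)) + tt • a (n+1) := by rw [h1]
    _ = u n - v (n+1) := by abel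
  have hvz : v (n+1) - z = e - tt • (α + f) := by
    have : v (n+1) = u n - tt • (α + f) := by rw [← hP]; abel
    rw [this, he]; abel
  have I1 : (0:ℝ) ≤ ⟪α, e - tt • (α + f)⟫ := by
    have h := hA.1 (v (n+1)) z (a (n+1)) (-w) (ha n) hzA
    rw [sub_neg_eq_add, ← hα, hvz] at h
    exact h
  have I2 : (0:ℝ) ≤ ⟪β, e - tt • (α + β)⟫ := by
    have h := hB.1 (u (n+1)) z (b (n+1)) w (hb n) hzB
    rw [← hβ, he'] at h
    exact h
  have key := dr_key_identity e α β f tt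
  have hn1 : (0:ℝ) ≤ 2 * tt * ⟪α, e - tt • (α + f)⟫ := by positivity
  have hn2 : (0:ℝ) ≤ 2 * tt * ⟪β, e - tt • (α + β)⟫ := by positivity
  rw [he', hP]
  linarith

end DRAux

set_option maxHeartbeats 1000000 in
/-- Weak convergence of the non-stationary Douglas–Rachford method to a point of
the extended solution set `S(A,B)`; in particular `0 ∈ (A + B)(u*)`. -/
theorem nonstationary_DR_weak_convergence
    {H : Type*} [NormedAddCommGroup H] [InnerProductSpace ℝ H] [CompleteSpace H]
    (A B : H → Set H) (hA : MaximalMonotoneOp A) (hB : MaximalMonotoneOp B)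
    (hS : ∃ z w : H, w ∈ B z ∧ -w ∈ A z)
    (t : ℕ → ℝ) (tlo thi : ℝ) (htlo : 0 < tlo)
    (hbnd : ∀ n, tlo ≤ t n ∧ t n ≤ thi)
    (hsum : Summable (fun n => |t n - t (n+1)|))
    (u v a b : ℕ → H)
    (hb0 : b 0 ∈ B (u 0))
    (ha : ∀ n, a (n+1) ∈ A (v (n+1)))
    (hva : ∀ n, v (n+1) + t (n+1) • a (n+1) = u n - t (n+1) • b n)
    (hb : ∀ n, b (n+1) ∈ B (u (n+1)))
    (hub : ∀ n, u (n+1) + t (n+1) • b (n+1) = v (n+1) + t (n+1) • b n) :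
    ∃ us bs : H, bs ∈ B us ∧ -bs ∈ A us ∧
      (∀ w : H, Tendsto (fun n => ⟪u n, w⟫) atTop (nhds ⟪us, w⟫)) ∧
      (∀ w : H, Tendsto (fun n => ⟪b n, w⟫) atTop (nhds ⟪bs, w⟫)) ∧
      (∃ p ∈ A us, ∃ q ∈ B us, p + q = 0) := by
  obtain ⟨z₀, w₀, hz₀B, hz₀A⟩ := hS
  have hbAll : ∀ n, b n ∈ B (u n) := by
    intro n
    cases n with
    | zero => exact hb0
    | succ k => exact hb k
  have hthi : 0 < thi := lt_of_lt_of_le htlo (le_trans (hbnd 0).1 (hbnd 0).2)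
  have hδnn : ∀ n, (0:ℝ) ≤ |t n - t (n+1)| := fun n => abs_nonneg _
  -- general Lyapunov analysis valid for any solution pair
  have main : ∀ z w : H, w ∈ B z → -w ∈ A z →
      (∃ M, ∀ n, ‖u n - z‖^2 + (t n)^2 * ‖b n - w‖^2 ≤ M) ∧
      Summable (fun n => ‖u n - v (n+1)‖^2) ∧
      ∃ L, Tendsto (fun n => ‖u n - z‖^2 + (t n)^2 * ‖b n - w‖^2) atTop (nhds L) := by
    intro z w hzB hzA
    refine lyapunov_real (fun n => ‖u n - z‖^2 + (t n)^2 * ‖b n - w‖^2)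
      (fun n => ‖u n - v (n+1)‖^2) (fun n => |t n - t (n+1)|) (2*thi/tlo^2)
      (by positivity) (fun n => by positivity) (fun n => by positivity) hδnn hsum ?_
    intro n
    have hstar := star_ineq A B hA hB t tlo htlo (fun m => (hbnd m).1) u v a b ha hva hb hub
      z w hzB hzA n
    have hF : (0:ℝ) ≤ ‖b n - w‖^2 := by positivity
    have h1 : (t (n+1))^2 - (t n)^2 ≤ 2 * thi * |t n - t (n+1)| := by
      have ha1 : t (n+1) - t n ≤ |t n - t (n+1)| := by
        rw [abs_sub_comm]; exact le_abs_self _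
      have ha2 : t (n+1) + t n ≤ 2 * thi := by
        have := (hbnd (n+1)).2; have := (hbnd n).2; linarith
      have ha3 : 0 ≤ t (n+1) + t n := by
        have h1 := (hbnd (n+1)).1; have h2 := (hbnd n).1; linarith
      have ha4 : (0:ℝ) ≤ |t n - t (n+1)| := hδnn n
      nlinarith
    have hf2 : tlo^2 * ‖b n - w‖^2 ≤ ‖u n - z‖^2 + (t n)^2 * ‖b n - w‖^2 := by
      have hlo := (hbnd n).1
      have h5 : tlo^2 * ‖b n - w‖^2 ≤ (t n)^2 * ‖b n - w‖^2 := by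
        have : tlo^2 ≤ (t n)^2 := by nlinarith
        exact mul_le_mul_of_nonneg_right this hF
      nlinarith [sq_nonneg ‖u n - z‖]
    have h6 : ((t (n+1))^2 - (t n)^2) * ‖b n - w‖^2 ≤ (2 * thi * |t n - t (n+1)|) * ‖b n - w‖^2 :=
      mul_le_mul_of_nonneg_right h1 hF
    have h7 : (2 * thi * |t n - t (n+1)|) * ‖b n - w‖^2
        ≤ 2*thi/tlo^2 * |t n - t (n+1)| * (‖u n - z‖^2 + (t n)^2 * ‖b n - w‖^2) := by
      have hcoef : (0:ℝ) ≤ 2 * thi * |t n - t (n+1)| / tlo^2 := by positivity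
      have h8 := mul_le_mul_of_nonneg_left hf2 hcoef
      have e1 : 2 * thi * |t n - t (n+1)| / tlo ^ 2 * (tlo ^ 2 * ‖b n - w‖ ^ 2)
          = (2 * thi * |t n - t (n+1)|) * ‖b n - w‖^2 := by
        field_simp
      rw [e1] at h8
      calc (2 * thi * |t n - t (n+1)|) * ‖b n - w‖^2
          ≤ 2 * thi * |t n - t (n+1)| / tlo ^ 2 * (‖u n - z‖^2 + (t n)^2 * ‖b n - w‖^2) := h8
      _ = 2*thi/tlo^2 * |t n - t (n+1)| * (‖u n - z‖^2 + (t n)^2 * ‖b n - w‖^2) := by ring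
    show ‖u (n+1) - z‖^2 + (t (n+1))^2 * ‖b (n+1) - w‖^2 + ‖u n - v (n+1)‖^2
        ≤ (‖u n - z‖^2 + (t n)^2 * ‖b n - w‖^2)
          + 2*thi/tlo^2 * |t n - t (n+1)| * (‖u n - z‖^2 + (t n)^2 * ‖b n - w‖^2)
    nlinarith [hstar, h6, h7]
  obtain ⟨⟨M₀, hM₀⟩, hsumP, -⟩ := main z₀ w₀ hz₀B hz₀A
  have hM₀nn : (0:ℝ) ≤ M₀ := le_trans (by positivity) (hM₀ 0)
  set Cu := Real.sqrt M₀ + ‖z₀‖ with hCudef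
  set Cb := Real.sqrt M₀ / tlo + ‖w₀‖ with hCbdef
  have hCu : ∀ n, ‖u n‖ ≤ Cu := by
    intro n
    have h2 : (0:ℝ) ≤ (t n)^2 * ‖b n - w₀‖^2 := by positivity
    have h1 : ‖u n - z₀‖^2 ≤ M₀ := by have := hM₀ n; linarith
    have h3 : ‖u n - z₀‖ ≤ Real.sqrt M₀ := (Real.le_sqrt (norm_nonneg _) hM₀nn).mpr h1
    have h4 : ‖u n‖ ≤ ‖u n - z₀‖ + ‖z₀‖ := by
      have := norm_add_le (u n - z₀) z₀
      simpa using this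
    rw [hCudef]; linarith
  have hCb : ∀ n, ‖b n‖ ≤ Cb := by
    intro n
    have hx : (0:ℝ) ≤ ‖b n - w₀‖ := norm_nonneg _
    have e1 : tlo^2 * ‖b n - w₀‖^2 ≤ (t n)^2 * ‖b n - w₀‖^2 := by
      refine mul_le_mul_of_nonneg_right ?_ (by positivity)
      have := (hbnd n).1; nlinarith
    have h1 : (tlo * ‖b n - w₀‖)^2 ≤ M₀ := by
      have := hM₀ n
      have h0 : (0:ℝ) ≤ ‖u n - z₀‖^2 := by positivity
      nlinarith
    have h2 : tlo * ‖b n - w₀‖ ≤ Real.sqrt M₀ :=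
      (Real.le_sqrt (by positivity) hM₀nn).mpr h1
    have h3 : ‖b n - w₀‖ ≤ Real.sqrt M₀ / tlo := by
      rw [le_div_iff₀ htlo]; linarith
    have h4 : ‖b n‖ ≤ ‖b n - w₀‖ + ‖w₀‖ := by
      have := norm_add_le (b n - w₀) w₀
      simpa using this
    rw [hCbdef]; linarith
  have hCunn : (0:ℝ) ≤ Cu := le_trans (norm_nonneg (u 0)) (hCu 0)
  have hCbnn : (0:ℝ) ≤ Cb := le_trans (norm_nonneg (b 0)) (hCb 0)
  -- the residual p n := a (n+1) + b n tends to 0 strongly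
  set p : ℕ → H := fun n => a (n+1) + b n with hpdef
  have hvp : ∀ n, v (n+1) = u n - t (n+1) • p n := by
    intro n
    have h1 := hva n
    show v (n+1) = u n - t (n+1) • (a (n+1) + b n)
    have h2 : v (n+1) + t (n+1) • a (n+1) + t (n+1) • b n = u n := by rw [h1]; abel
    rw [← h2, smul_add]; abel
  have hPp : ∀ n, u n - v (n+1) = t (n+1) • p n := by
    intro n; rw [hvp n]; abel
  have hpto0 : Tendsto (fun n => ‖p n‖) atTop (nhds 0) := by
    have h2 : Tendsto (fun n => ‖u n - v (n+1)‖^2) atTop (nhds 0) := hsumP.tendsto_atTop_zero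
    have h3 : Tendsto (fun n => ‖u n - v (n+1)‖) atTop (nhds 0) := by
      have h4 := (Real.continuous_sqrt.tendsto 0).comp h2
      have e : (fun n => Real.sqrt (‖u n - v (n+1)‖^2)) = fun n => ‖u n - v (n+1)‖ :=
        funext fun n => Real.sqrt_sq (norm_nonneg _)
      have h5 : Tendsto (fun n => Real.sqrt (‖u n - v (n+1)‖^2)) atTop (nhds (Real.sqrt 0)) := h4
      rw [e, Real.sqrt_zero] at h5
      exact h5
    refine squeeze_zero (fun n => norm_nonneg _) (fun n => ?_) (by simpa using h3.div_const tlo)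
    have h5 : tlo * ‖p n‖ ≤ ‖u n - v (n+1)‖ := by
      rw [hPp n, norm_smul, Real.norm_eq_abs, abs_of_pos (lt_of_lt_of_le htlo (hbnd (n+1)).1)]
      exact mul_le_mul_of_nonneg_right (hbnd (n+1)).1 (norm_nonneg _)
    rw [le_div_iff₀ htlo]
    linarith
  -- the stepsizes converge
  have htstar : ∃ tstar, tlo ≤ tstar ∧ Tendsto t atTop (nhds tstar) := by
    have hΔ : Summable (fun n => t (n+1) - t n) := by
      refine Summable.of_abs ?_
      simpa [abs_sub_comm] using hsum
    have hpart := hΔ.hasSum.tendsto_sum_nat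
    have htel : ∀ n, ∑ k ∈ Finset.range n, (t (k+1) - t k) = t n - t 0 :=
      fun n => Finset.sum_range_sub t n
    have htt : Tendsto t atTop (nhds (t 0 + ∑' n, (t (n+1) - t n))) := by
      have h1 := hpart.const_add (t 0)
      have e : (fun n => t 0 + ∑ k ∈ Finset.range n, (t (k+1) - t k)) = t := by
        funext n; rw [htel n]; ring
      rwa [e] at h1
    exact ⟨_, ge_of_tendsto' htt (fun n => (hbnd n).1), htt⟩
  -- every ultrafilter finer than atTop yields a weak limit point lying in S(A,B)
  have sol : ∀ U : Ultrafilter ℕ, (U : Filter ℕ) ≤ atTop → ∃ us bs : H,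
      (∀ w : H, Tendsto (fun n => ⟪u n, w⟫) (U : Filter ℕ) (nhds ⟪us, w⟫)) ∧
      (∀ w : H, Tendsto (fun n => ⟪b n, w⟫) (U : Filter ℕ) (nhds ⟪bs, w⟫)) ∧
      bs ∈ B us ∧ -bs ∈ A us := by
    intro U hU
    obtain ⟨us, hus⟩ := weak_limit_of_bounded u Cu hCu U
    obtain ⟨bs, hbs⟩ := weak_limit_of_bounded b Cb hCb U
    have husflip : ∀ w : H, Tendsto (fun n => ⟪w, u n⟫) (U : Filter ℕ) (nhds ⟪w, us⟫) := by
      intro w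
      have h := hus w
      have e1 : (fun n => ⟪u n, w⟫) = fun n => ⟪w, u n⟫ := funext fun n => real_inner_comm _ _
      rw [e1, real_inner_comm] at h
      exact h
    have hkey : ∀ y₁ v₁, v₁ ∈ A y₁ → ∀ y₂ v₂, v₂ ∈ B y₂ →
        (0:ℝ) ≤ ⟪bs - v₂, us - y₂⟫ + ⟪-bs - v₁, us - y₁⟫ := by
      intro y₁ v₁ hv₁ y₂ v₂ hv₂
      have hEnn : ∀ n, (0:ℝ) ≤ ⟪b n - v₂, u n - y₂⟫ + ⟪a (n+1) - v₁, v (n+1) - y₁⟫ :=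
        fun n => add_nonneg (hB.1 _ _ _ _ (hbAll n) hv₂) (hA.1 _ _ _ _ (ha n) hv₁)
      have hEfg : ∀ n, ⟪b n - v₂, u n - y₂⟫ + ⟪a (n+1) - v₁, v (n+1) - y₁⟫
          = (-⟪b n, y₂⟫ - ⟪v₂, u n⟫ + ⟪v₂, y₂⟫ + ⟪b n, y₁⟫ - ⟪v₁, u n⟫ + ⟪v₁, y₁⟫)
            + (⟪p n, u n - y₁⟫ - ⟪p n - b n - v₁, t (n+1) • p n⟫) := by
        intro n
        have h1 : a (n+1) = p n - b n := by
          show a (n+1) = (a (n+1) + b n) - b n; abel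
        rw [h1, hvp n]
        simp only [inner_sub_left, inner_sub_right, inner_smul_right]
        ring
      have hgnorm : ∀ n, ‖⟪p n, u n - y₁⟫ - ⟪p n - b n - v₁, t (n+1) • p n⟫‖
          ≤ (Cu + ‖y₁‖) * ‖p n‖ + (‖p n‖ + Cb + ‖v₁‖) * (thi * ‖p n‖) := by
        intro n
        rw [Real.norm_eq_abs]
        have e1 : |⟪p n, u n - y₁⟫| ≤ (Cu + ‖y₁‖) * ‖p n‖ := by
          have h1 := abs_real_inner_le_norm (p n) (u n - y₁)
          have h2 : ‖u n - y₁‖ ≤ Cu + ‖y₁‖ :=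
            le_trans (norm_sub_le _ _) (by have := hCu n; linarith)
          calc |⟪p n, u n - y₁⟫| ≤ ‖p n‖ * ‖u n - y₁‖ := h1
          _ ≤ ‖p n‖ * (Cu + ‖y₁‖) := mul_le_mul_of_nonneg_left h2 (norm_nonneg _)
          _ = (Cu + ‖y₁‖) * ‖p n‖ := by ring
        have e2 : |⟪p n - b n - v₁, t (n+1) • p n⟫| ≤ (‖p n‖ + Cb + ‖v₁‖) * (thi * ‖p n‖) := by
          have h1 := abs_real_inner_le_norm (p n - b n - v₁) (t (n+1) • p n)
          have h2 : ‖p n - b n - v₁‖ ≤ ‖p n‖ + Cb + ‖v₁‖ := by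
            calc ‖p n - b n - v₁‖ ≤ ‖p n - b n‖ + ‖v₁‖ := norm_sub_le _ _
            _ ≤ ‖p n‖ + ‖b n‖ + ‖v₁‖ := by have := norm_sub_le (p n) (b n); linarith
            _ ≤ ‖p n‖ + Cb + ‖v₁‖ := by have := hCb n; linarith
          have h3 : ‖t (n+1) • p n‖ ≤ thi * ‖p n‖ := by
            rw [norm_smul, Real.norm_eq_abs, abs_of_pos (lt_of_lt_of_le htlo (hbnd (n+1)).1)]
            exact mul_le_mul_of_nonneg_right (hbnd (n+1)).2 (norm_nonneg _)
          calc |⟪p n - b n - v₁, t (n+1) • p n⟫| ≤ ‖p n - b n - v₁‖ * ‖t (n+1) • p n‖ := h1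
          _ ≤ (‖p n‖ + Cb + ‖v₁‖) * (thi * ‖p n‖) := by
              refine mul_le_mul h2 h3 (norm_nonneg _) ?_
              have := norm_nonneg (p n); have := norm_nonneg (v₁); linarith
        have habs : |⟪p n, u n - y₁⟫ - ⟪p n - b n - v₁, t (n+1) • p n⟫|
            ≤ |⟪p n, u n - y₁⟫| + |⟪p n - b n - v₁, t (n+1) • p n⟫| := by
          rw [sub_eq_add_neg]
          refine le_trans (abs_add_le _ _) ?_
          rw [abs_neg]
        linarith
      have hg0 : Tendsto (fun n => ⟪p n, u n - y₁⟫ - ⟪p n - b n - v₁, t (n+1) • p n⟫)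
          atTop (nhds 0) := by
        refine squeeze_zero_norm hgnorm ?_
        have hlim : Tendsto (fun n => (Cu + ‖y₁‖) * ‖p n‖ + (‖p n‖ + Cb + ‖v₁‖) * (thi * ‖p n‖))
            atTop (nhds ((Cu + ‖y₁‖) * 0 + ((0 + Cb) + ‖v₁‖) * (thi * 0))) :=
          (hpto0.const_mul _).add ((((hpto0.add_const Cb)).add_const ‖v₁‖).mul (hpto0.const_mul thi))
        simpa using hlim
      have hf : Tendsto (fun n => -⟪b n, y₂⟫ - ⟪v₂, u n⟫ + ⟪v₂, y₂⟫ + ⟪b n, y₁⟫ - ⟪v₁, u n⟫ + ⟪v₁, y₁⟫)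
          (U : Filter ℕ)
          (nhds (-⟪bs, y₂⟫ - ⟪v₂, us⟫ + ⟪v₂, y₂⟫ + ⟪bs, y₁⟫ - ⟪v₁, us⟫ + ⟪v₁, y₁⟫)) :=
        (((((hbs y₂).neg.sub (husflip v₂)).add tendsto_const_nhds).add (hbs y₁)).sub
          (husflip v₁)).add tendsto_const_nhds
      have hE : Tendsto (fun n => ⟪b n - v₂, u n - y₂⟫ + ⟪a (n+1) - v₁, v (n+1) - y₁⟫)
          (U : Filter ℕ)
          (nhds ((-⟪bs, y₂⟫ - ⟪v₂, us⟫ + ⟪v₂, y₂⟫ + ⟪bs, y₁⟫ - ⟪v₁, us⟫ + ⟪v₁, y₁⟫) + 0)) :=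
        Tendsto.congr (fun n => (hEfg n).symm) (hf.add (hg0.mono_left hU))
      have h0 := ge_of_tendsto' hE hEnn
      have hfin : ⟪bs - v₂, us - y₂⟫ + ⟪-bs - v₁, us - y₁⟫
          = (-⟪bs, y₂⟫ - ⟪v₂, us⟫ + ⟪v₂, y₂⟫ + ⟪bs, y₁⟫ - ⟪v₁, us⟫ + ⟪v₁, y₁⟫) + 0 := by
        simp only [inner_sub_left, inner_sub_right, inner_neg_left]
        ring
      rw [hfin]
      exact h0
    by_cases hcase : bs ∈ B us
    · refine ⟨us, bs, hus, hbs, hcase, ?_⟩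
      refine hA.2 us (-bs) (fun y v' hv' => ?_)
      have h := hkey y v' hv' us bs hcase
      simpa using h
    · exfalso
      have hex : ∃ y₂ v₂, v₂ ∈ B y₂ ∧ ⟪bs - v₂, us - y₂⟫ < 0 := by
        by_contra hno
        push_neg at hno
        exact hcase (hB.2 us bs (fun y v' hv' => hno y v' hv'))
      obtain ⟨y₂, v₂, hv₂, hneg⟩ := hex
      have hAin : -bs ∈ A us := by
        refine hA.2 us (-bs) (fun y v' hv' => ?_)
        have h := hkey y v' hv' y₂ v₂ hv₂
        linarith
      have h0 : ∀ y v', v' ∈ B y → (0:ℝ) ≤ ⟪bs - v', us - y⟫ := by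
        intro y v' hv'
        have h := hkey us (-bs) hAin y v' hv'
        have e : ⟪-bs - -bs, us - us⟫ = (0:ℝ) := by simp
        linarith
      exact hcase (hB.2 us bs h0)
  obtain ⟨U₀, hU₀⟩ := Ultrafilter.exists_le (atTop : Filter ℕ)
  obtain ⟨us, bs, hus, hbs, hBus, hAus⟩ := sol U₀ hU₀
  obtain ⟨tstar, htslo, htts⟩ := htstar
  have ht2 : Tendsto (fun n => (t n)^2) atTop (nhds (tstar^2)) := by
    have := htts.mul htts
    simpa [pow_two] using this
  have htsp : (0:ℝ) < tstar^2 := by nlinarith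
  have solEq : ∀ U : Ultrafilter ℕ, (U : Filter ℕ) ≤ atTop →
      (∀ w : H, Tendsto (fun n => ⟪u n, w⟫) (U : Filter ℕ) (nhds ⟪us, w⟫)) ∧
      (∀ w : H, Tendsto (fun n => ⟪b n, w⟫) (U : Filter ℕ) (nhds ⟪bs, w⟫)) := by
    intro U hU
    obtain ⟨us', bs', hus', hbs', hBus', hAus'⟩ := sol U hU
    obtain ⟨L₁, hL₁⟩ := (main us bs hBus hAus).2.2
    obtain ⟨L₂, hL₂⟩ := (main us' bs' hBus' hAus').2.2
    have hD : Tendsto (fun n => (‖u n - us‖^2 + (t n)^2*‖b n - bs‖^2)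
        - (‖u n - us'‖^2 + (t n)^2*‖b n - bs'‖^2)) atTop (nhds (L₁ - L₂)) := hL₁.sub hL₂
    have hexp : ∀ n, (‖u n - us‖^2 + (t n)^2*‖b n - bs‖^2)
          - (‖u n - us'‖^2 + (t n)^2*‖b n - bs'‖^2)
        = -2*⟪u n, us - us'⟫ + (‖us‖^2 - ‖us'‖^2)
          + (t n)^2 * (-2*⟪b n, bs - bs'⟫ + (‖bs‖^2 - ‖bs'‖^2)) := by
      intro n
      simp only [norm_sub_sq_real, inner_sub_right]
      ring
    have hlim : ∀ (W : Ultrafilter ℕ), (W : Filter ℕ) ≤ atTop →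
        ∀ uu bb : H, (∀ w, Tendsto (fun n => ⟪u n, w⟫) (W : Filter ℕ) (nhds ⟪uu, w⟫)) →
        (∀ w, Tendsto (fun n => ⟪b n, w⟫) (W : Filter ℕ) (nhds ⟪bb, w⟫)) →
        L₁ - L₂ = -2*⟪uu, us - us'⟫ + (‖us‖^2 - ‖us'‖^2)
          + tstar^2 * (-2*⟪bb, bs - bs'⟫ + (‖bs‖^2 - ‖bs'‖^2)) := by
      intro W hW uu bb huu hbb
      refine tendsto_nhds_unique (hD.mono_left hW) ?_
      refine Tendsto.congr (fun n => (hexp n).symm) ?_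
      exact ((((huu (us - us')).const_mul (-2)).add_const _).add
        ((ht2.mono_left hW).mul (((hbb (bs - bs')).const_mul (-2)).add_const _)))
    have h1 := hlim U₀ hU₀ us bs hus hbs
    have h2 := hlim U hU us' bs' hus' hbs'
    have e1 : ⟪us, us - us'⟫ - ⟪us', us - us'⟫ = ‖us - us'‖^2 := by
      rw [← inner_sub_left, real_inner_self_eq_norm_sq]
    have e2 : ⟪bs, bs - bs'⟫ - ⟪bs', bs - bs'⟫ = ‖bs - bs'‖^2 := by
      rw [← inner_sub_left, real_inner_self_eq_norm_sq]
    have h3 : (⟪us, us - us'⟫ - ⟪us', us - us'⟫)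
        + tstar^2 * (⟪bs, bs - bs'⟫ - ⟪bs', bs - bs'⟫) = 0 := by
      linarith [h1, h2]
    rw [e1, e2] at h3
    have h4 : ‖us - us'‖^2 = 0 := by
      nlinarith [sq_nonneg ‖us - us'‖, sq_nonneg ‖bs - bs'‖,
        mul_nonneg htsp.le (sq_nonneg ‖bs - bs'‖)]
    have h5 : ‖bs - bs'‖^2 = 0 := by
      nlinarith [sq_nonneg ‖us - us'‖, sq_nonneg ‖bs - bs'‖,
        mul_pos htsp (by positivity : (0:ℝ) < 1)]
    have hue : us' = us := by
      have : ‖us - us'‖ = 0 := by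
        have := pow_eq_zero_iff (n := 2) (two_ne_zero) |>.mp h4
        exact this
      exact (sub_eq_zero.mp (norm_eq_zero.mp this)).symm
    have hbe : bs' = bs := by
      have : ‖bs - bs'‖ = 0 := pow_eq_zero_iff (n := 2) (two_ne_zero) |>.mp h5
      exact (sub_eq_zero.mp (norm_eq_zero.mp this)).symm
    exact ⟨fun w => hue ▸ hus' w, fun w => hbe ▸ hbs' w⟩
  refine ⟨us, bs, hBus, hAus, ?_, ?_, ⟨-bs, hAus, bs, hBus, by abel⟩⟩
  · intro w
    rw [tendsto_iff_ultrafilter]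
    intro U hU
    exact (solEq U hU).1 w
  · intro w
    rw [tendsto_iff_ultrafilter]
    intro U hU
    exact (solEq U hU).2 w
end

section
/- Let A, B be maximally monotone on a Hilbert space H and suppose the Douglas–Rachford type iterates satisfy the recursion above with stepsizes t_n ∈ [t̲, t̄], Σ |t_n − t_{n+1}| < ∞. Then Σ_{n=1}^∞ ‖u^{n−1} − vⁿ‖² < ∞, and consequently u^{n−1} − vⁿ → 0 and aⁿ + b^{n−1} → 0 strongly as n → ∞. -/
open RealInnerProductSpace Filter

private lemma aux_le_of_sq_le_sq {a b : ℝ} (ha : 0 ≤ a) (hb : 0 ≤ b) (h : a^2 ≤ b^2) :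
    a ≤ b := by nlinarith

private lemma aux_inner_id {H : Type*} [NormedAddCommGroup H] [InnerProductSpace ℝ H]
    (T : ℝ) (vz aw bw uz dd : H) (huz : uz = vz + dd) (hdd : dd = T • (aw + bw)) :
    ⟪vz + T • bw, dd⟫ = T * ⟪aw, vz⟫ + T * ⟪bw, uz⟫ := by
  subst huz hdd
  simp [inner_add_left, inner_add_right, inner_smul_left, inner_smul_right,
    real_inner_comm bw vz, real_inner_comm aw vz]
  ring

/-- One-step firm-nonexpansiveness-type inequality for the DR step. -/
private lemma aux_step {H : Type*} [NormedAddCommGroup H] [InnerProductSpace ℝ H]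
    (T : ℝ) (hT : 0 < T) (uz vz aw bw : H)
    (hrec : uz - vz = T • (aw + bw))
    (h1 : 0 ≤ ⟪aw, vz⟫) (h2 : 0 ≤ ⟪bw, uz⟫) :
    ‖vz + T • bw‖^2 + ‖uz - vz‖^2 ≤ ‖uz + T • bw‖^2 := by
  set dd := uz - vz with hdd
  have huz : uz = vz + dd := by rw [hdd]; abel
  have hinner : ⟪vz + T • bw, dd⟫ = T * ⟪aw, vz⟫ + T * ⟪bw, uz⟫ :=
    aux_inner_id T vz aw bw uz dd huz hrec
  have hpos : 0 ≤ ⟪vz + T • bw, dd⟫ := by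
    rw [hinner]
    exact add_nonneg (mul_nonneg hT.le h1) (mul_nonneg hT.le h2)
  have hexp : ‖uz + T • bw - dd‖^2 = ‖uz + T • bw‖^2 - 2*⟪uz + T • bw, dd⟫ + ‖dd‖^2 :=
    norm_sub_sq_real _ _
  have h3 : uz + T • bw - dd = vz + T • bw := by rw [huz]; abel
  have h4 : ⟪uz + T • bw, dd⟫ = ⟪vz + T • bw, dd⟫ + ⟪dd, dd⟫ := by
    rw [huz]; simp [inner_add_left]; ring
  have h5 : ⟪dd, dd⟫ = ‖dd‖^2 := real_inner_self_eq_norm_sq dd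
  rw [h3] at hexp
  linarith [hexp, hpos]

/-- Separation inequality: the `b`-component of the Fejér quantity is controlled. -/
private lemma aux_sep {H : Type*} [NormedAddCommGroup H] [InnerProductSpace ℝ H]
    (tlo T : ℝ) (htlo : 0 < tlo) (htT : tlo ≤ T) (p q : H) (h : 0 ≤ ⟪q, p⟫) :
    tlo^2 * ‖q‖^2 + ‖p‖^2 ≤ ‖p + T • q‖^2 := by
  have hexp : ‖p + T • q‖^2 = ‖p‖^2 + 2*⟪p, T • q⟫ + ‖T • q‖^2 := norm_add_sq_real _ _
  have h1 : ⟪p, T • q⟫ = T * ⟪q, p⟫ := by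
    rw [real_inner_smul_right, real_inner_comm]
  have h2 : ‖T • q‖^2 = T^2 * ‖q‖^2 := by
    rw [norm_smul, Real.norm_eq_abs, mul_pow, sq_abs]
  have hq : 0 ≤ ‖q‖^2 := sq_nonneg _
  have h3 : tlo^2 * ‖q‖^2 ≤ T^2 * ‖q‖^2 :=
    mul_le_mul_of_nonneg_right (by nlinarith) hq
  have h4 : 0 ≤ T * ⟪q, p⟫ := mul_nonneg (htlo.trans_le htT).le h
  linarith

/-- Summability of `‖u^{n−1} − vⁿ‖²` and strong convergence of `u^{n−1} − vⁿ`
and `aⁿ + b^{n−1}` to zero for the non-stationary Douglas–Rachford iterates. -/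
theorem nonstationary_DR_residual_summable
    {H : Type*} [NormedAddCommGroup H] [InnerProductSpace ℝ H] [CompleteSpace H]
    (A B : H → Set H) (hA : MaximalMonotoneOp A) (hB : MaximalMonotoneOp B)
    (hS : ∃ z w : H, w ∈ B z ∧ -w ∈ A z)
    (t : ℕ → ℝ) (tlo thi : ℝ) (htlo : 0 < tlo)
    (hbnd : ∀ n, tlo ≤ t n ∧ t n ≤ thi)
    (hsum : Summable (fun n => |t n - t (n+1)|))
    (u v a b : ℕ → H)
    (hb0 : b 0 ∈ B (u 0))
    (ha : ∀ n, a (n+1) ∈ A (v (n+1)))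
    (hva : ∀ n, v (n+1) + t (n+1) • a (n+1) = u n - t (n+1) • b n)
    (hb : ∀ n, b (n+1) ∈ B (u (n+1)))
    (hub : ∀ n, u (n+1) + t (n+1) • b (n+1) = v (n+1) + t (n+1) • b n) :
    Summable (fun n => ‖u n - v (n+1)‖^2) ∧
      Tendsto (fun n => u n - v (n+1)) atTop (nhds 0) ∧
      Tendsto (fun n => a (n+1) + b n) atTop (nhds 0) := by
  obtain ⟨z, w, hwB, hwA⟩ := hS
  have hbn : ∀ n, b n ∈ B (u n) := fun n => by
    cases n with
    | zero => exact hb0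
    | succ k => exact hb k
  have ht : ∀ n, 0 < t n := fun n => lt_of_lt_of_le htlo (hbnd n).1
  -- the residual
  set d : ℕ → H := fun n => u n - v (n+1) with hd_def
  -- the Fejér quantities
  set r : ℕ → ℝ := fun n => ‖u n - z + t (n+1) • (b n - w)‖ with hr_def
  set s : ℕ → ℝ := fun n => ‖v (n+1) - z + t (n+1) • (b n - w)‖ with hs_def
  set ε : ℕ → ℝ := fun n => |t (n+1) - t (n+2)| / tlo with hε_def
  have hε0 : ∀ n, 0 ≤ ε n := fun n => div_nonneg (abs_nonneg _) htlo.le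
  have hs0 : ∀ n, 0 ≤ s n := fun n => norm_nonneg _
  have hr0 : ∀ n, 0 ≤ r n := fun n => norm_nonneg _
  -- the recursion in subtracted form
  have hdTab : ∀ n, d n = t (n+1) • (a (n+1) + b n) := by
    intro n
    have h := hva n
    have h2 : u n = v (n+1) + t (n+1) • a (n+1) + t (n+1) • b n := by
      rw [h]; abel
    show u n - v (n+1) = t (n+1) • (a (n+1) + b n)
    rw [h2, smul_add]; abel
  -- key one-step inequality
  have key1 : ∀ n, s n ^2 + ‖d n‖^2 ≤ r n ^2 := by
    intro n
    have h1 : 0 ≤ ⟪a (n+1) + w, v (n+1) - z⟫ := by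
      have := hA.1 (v (n+1)) z (a (n+1)) (-w) (ha n) hwA
      rwa [sub_neg_eq_add] at this
    have h2 : 0 ≤ ⟪b n - w, u n - z⟫ := hB.1 (u n) z (b n) w (hbn n) hwB
    have hrec : (u n - z) - (v (n+1) - z) = t (n+1) • ((a (n+1) + w) + (b n - w)) := by
      have := hdTab n
      rw [hd_def] at this
      simp only at this
      have h3 : (a (n+1) + w) + (b n - w) = a (n+1) + b n := by abel
      rw [h3, ← this]; abel
    have := aux_step (t (n+1)) (ht (n+1)) (u n - z) (v (n+1) - z)
      (a (n+1) + w) (b n - w) hrec h1 h2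
    have h4 : (u n - z) - (v (n+1) - z) = d n := by rw [hd_def]; simp only; abel
    rw [h4] at this
    exact this
  -- s n rewritten with the next iterates
  have hsr : ∀ n, v (n+1) - z + t (n+1) • (b n - w)
      = u (n+1) - z + t (n+1) • (b (n+1) - w) := by
    intro n
    have h2 : v (n+1) + t (n+1) • b n = u (n+1) + t (n+1) • b (n+1) := (hub n).symm
    calc v (n+1) - z + t (n+1) • (b n - w)
        = (v (n+1) + t (n+1) • b n) - z - t (n+1) • w := by rw [smul_sub]; abel
      _ = (u (n+1) + t (n+1) • b (n+1)) - z - t (n+1) • w := by rw [h2]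
      _ = u (n+1) - z + t (n+1) • (b (n+1) - w) := by rw [smul_sub]; abel
  -- separation : tlo * ‖b (n+1) - w‖ ≤ s n
  have hbb : ∀ n, tlo * ‖b (n+1) - w‖ ≤ s n := by
    intro n
    have hmono : 0 ≤ ⟪b (n+1) - w, u (n+1) - z⟫ := hB.1 (u (n+1)) z (b (n+1)) w (hb n) hwB
    have := aux_sep tlo (t (n+1)) htlo (hbnd (n+1)).1 (u (n+1) - z) (b (n+1) - w) hmono
    have hsq : (tlo * ‖b (n+1) - w‖)^2 ≤ s n ^2 := by
      rw [hs_def]; simp only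
      rw [hsr n, mul_pow]
      nlinarith [sq_nonneg ‖u (n+1) - z‖]
    exact aux_le_of_sq_le_sq (mul_nonneg htlo.le (norm_nonneg _)) (hs0 n) hsq
  -- recursion for r
  have hr1 : ∀ n, r (n+1) ≤ s n + ε n * s n := by
    intro n
    have hkey : u (n+1) - z + t (n+2) • (b (n+1) - w)
        = (u (n+1) - z + t (n+1) • (b (n+1) - w)) + (t (n+2) - t (n+1)) • (b (n+1) - w) := by
      rw [sub_smul]; abel
    have h1 : r (n+1) ≤ ‖u (n+1) - z + t (n+1) • (b (n+1) - w)‖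
        + ‖(t (n+2) - t (n+1)) • (b (n+1) - w)‖ := by
      rw [hr_def]; simp only
      rw [hkey]
      exact norm_add_le _ _
    have h2 : ‖(t (n+2) - t (n+1)) • (b (n+1) - w)‖
        = |t (n+2) - t (n+1)| * ‖b (n+1) - w‖ := by
      rw [norm_smul, Real.norm_eq_abs]
    have h3 : ‖u (n+1) - z + t (n+1) • (b (n+1) - w)‖ = s n := by
      rw [hs_def]; simp only; rw [hsr n]
    have h4 : |t (n+2) - t (n+1)| * ‖b (n+1) - w‖ ≤ ε n * s n := by
      rw [hε_def]; simp only
      rw [abs_sub_comm (t (n+2)) (t (n+1))]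
      have h5 : ‖b (n+1) - w‖ ≤ s n / tlo := by
        rw [le_div_iff₀ htlo]
        calc ‖b (n+1) - w‖ * tlo = tlo * ‖b (n+1) - w‖ := by ring
          _ ≤ s n := hbb n
      calc |t (n+1) - t (n+2)| * ‖b (n+1) - w‖
          ≤ |t (n+1) - t (n+2)| * (s n / tlo) :=
            mul_le_mul_of_nonneg_left h5 (abs_nonneg _)
        _ = |t (n+1) - t (n+2)| / tlo * s n := by ring
    calc r (n+1) ≤ ‖u (n+1) - z + t (n+1) • (b (n+1) - w)‖
        + ‖(t (n+2) - t (n+1)) • (b (n+1) - w)‖ := h1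
      _ = s n + |t (n+2) - t (n+1)| * ‖b (n+1) - w‖ := by rw [h2, h3]
      _ ≤ s n + ε n * s n := by linarith [h4]
  have hrs : ∀ n, s n ≤ r n := by
    intro n
    exact aux_le_of_sq_le_sq (hs0 n) (hr0 n) (by nlinarith [key1 n, sq_nonneg ‖d n‖])
  -- summability of ε
  have hsumε : Summable ε := by
    have h1 : Summable (fun n => |t (n+1) - t (n+1+1)|) := (summable_nat_add_iff (f := fun n => |t n - t (n+1)|) 1).mpr hsum
    exact h1.div_const tlo
  set E : ℝ := ∑' n, ε n with hE_def
  have hE0 : 0 ≤ E := tsum_nonneg hε0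
  have hεE : ∀ n, ε n ≤ E := fun n => Summable.le_tsum hsumε n (fun m _ => hε0 m)
  have hSn : ∀ n, ∑ i ∈ Finset.range n, ε i ≤ E :=
    fun n => Summable.sum_le_tsum (Finset.range n) (fun i _ => hε0 i) hsumε
  -- boundedness of r
  have hrbd : ∀ n, r n ≤ r 0 * Real.exp E := by
    have key : ∀ n, r n ≤ r 0 * Real.exp (∑ i ∈ Finset.range n, ε i) := by
      intro n
      induction n with
      | zero => simp
      | succ k ih =>
        have h1 : r (k+1) ≤ r k * (1 + ε k) := by
          have := hr1 k
          have h2 : s k + ε k * s k = s k * (1 + ε k) := by ring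
          have h3 : s k * (1 + ε k) ≤ r k * (1 + ε k) :=
            mul_le_mul_of_nonneg_right (hrs k) (by linarith [hε0 k])
          linarith
        have h4 : (1 : ℝ) + ε k ≤ Real.exp (ε k) := by
          have := Real.add_one_le_exp (ε k)
          linarith
        have h5 : r k * (1 + ε k) ≤ r 0 * Real.exp (∑ i ∈ Finset.range k, ε i) * Real.exp (ε k) := by
          apply mul_le_mul ih h4 (by linarith [hε0 k]) (by positivity)
        calc r (k+1) ≤ r k * (1 + ε k) := h1
          _ ≤ r 0 * Real.exp (∑ i ∈ Finset.range k, ε i) * Real.exp (ε k) := h5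
          _ = r 0 * Real.exp (∑ i ∈ Finset.range (k+1), ε i) := by
              rw [mul_assoc, ← Real.exp_add, Finset.sum_range_succ]
    intro n
    calc r n ≤ r 0 * Real.exp (∑ i ∈ Finset.range n, ε i) := key n
      _ ≤ r 0 * Real.exp E :=
          mul_le_mul_of_nonneg_left (Real.exp_le_exp.mpr (hSn n)) (hr0 0)
  set R : ℝ := r 0 * Real.exp E with hR_def
  have hR0 : 0 ≤ R := mul_nonneg (hr0 0) (Real.exp_pos E).le
  set C : ℝ := R^2 * (2 + E) with hC_def
  have hC0 : 0 ≤ C := mul_nonneg (sq_nonneg R) (by linarith)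
  -- quantitative decrease
  have keyC : ∀ n, r (n+1)^2 ≤ s n ^2 + C * ε n := by
    intro n
    have h1 : r (n+1) ≤ s n * (1 + ε n) := by
      have := hr1 n; linarith [this, (by ring : s n + ε n * s n = s n * (1 + ε n)).le]
    have hsR : s n ≤ R := le_trans (hrs n) (hrbd n)
    have h2 : r (n+1)^2 ≤ (s n * (1 + ε n))^2 := by
      apply pow_le_pow_left₀ (hr0 (n+1)) h1
    have h3 : (s n * (1 + ε n))^2 = s n^2 + s n^2 * ε n * (2 + ε n) := by ring
    have h4 : s n^2 * ε n * (2 + ε n) ≤ R^2 * ε n * (2 + E) := by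
      have hsn2 : s n ^2 ≤ R^2 := pow_le_pow_left₀ (hs0 n) hsR 2
      nlinarith [mul_nonneg (mul_nonneg (sub_nonneg.mpr hsn2) (hε0 n))
          (by linarith [hε0 n] : (0:ℝ) ≤ 2 + ε n),
        mul_nonneg (mul_nonneg (sq_nonneg R) (hε0 n)) (sub_nonneg.mpr (hεE n))]
    calc r (n+1)^2 ≤ (s n * (1 + ε n))^2 := h2
      _ = s n^2 + s n^2 * ε n * (2 + ε n) := h3
      _ ≤ s n^2 + R^2 * ε n * (2 + E) := by linarith
      _ = s n^2 + C * ε n := by rw [hC_def]; ring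
  have keyF : ∀ n, ‖d n‖^2 ≤ r n^2 - r (n+1)^2 + C * ε n := by
    intro n
    linarith [key1 n, keyC n]
  -- summability of the residuals
  have hsumd : Summable (fun n => ‖d n‖^2) := by
    apply summable_of_sum_range_le (c := r 0^2 + C * E) (fun n => sq_nonneg _)
    intro n
    calc ∑ i ∈ Finset.range n, ‖d i‖^2
        ≤ ∑ i ∈ Finset.range n, (r i^2 - r (i+1)^2 + C * ε i) :=
          Finset.sum_le_sum (fun i _ => keyF i)
      _ = (∑ i ∈ Finset.range n, (r i^2 - r (i+1)^2)) + C * ∑ i ∈ Finset.range n, ε i := by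
          rw [Finset.sum_add_distrib, Finset.mul_sum]
      _ = (r 0^2 - r n^2) + C * ∑ i ∈ Finset.range n, ε i := by
          rw [Finset.sum_range_sub' (fun i => r i^2)]
      _ ≤ r 0^2 + C * E := by
          have := mul_le_mul_of_nonneg_left (hSn n) hC0
          nlinarith [sq_nonneg (r n)]
  -- convergence of the residuals
  have htd2 : Tendsto (fun n => ‖d n‖^2) atTop (nhds 0) := hsumd.tendsto_atTop_zero
  have htdn : Tendsto (fun n => ‖d n‖) atTop (nhds 0) := by
    have h1 : (fun n => ‖d n‖) = fun n => Real.sqrt (‖d n‖^2) :=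
      funext fun n => (Real.sqrt_sq (norm_nonneg _)).symm
    rw [h1]
    have h2 : Tendsto (fun n : ℕ => Real.sqrt (‖d n‖^2)) atTop (nhds (Real.sqrt 0)) :=
      (Real.continuous_sqrt.tendsto 0).comp htd2
    rw [Real.sqrt_zero] at h2
    exact h2
  have htd : Tendsto d atTop (nhds 0) := tendsto_zero_iff_norm_tendsto_zero.mpr htdn
  -- convergence of aⁿ⁺¹ + bⁿ
  have hab : ∀ n, ‖a (n+1) + b n‖ ≤ (1/tlo) * ‖d n‖ := by
    intro n
    have h1 : ‖d n‖ = t (n+1) * ‖a (n+1) + b n‖ := by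
      rw [hdTab n, norm_smul, Real.norm_eq_abs, abs_of_pos (ht (n+1))]
    have h2 : tlo * ‖a (n+1) + b n‖ ≤ ‖d n‖ := by
      rw [h1]
      exact mul_le_mul_of_nonneg_right (hbnd (n+1)).1 (norm_nonneg _)
    rw [div_mul_eq_mul_div, le_div_iff₀ htlo]
    nlinarith [h2]
  have htab : Tendsto (fun n => a (n+1) + b n) atTop (nhds 0) := by
    apply tendsto_zero_iff_norm_tendsto_zero.mpr
    apply squeeze_zero (fun n => norm_nonneg _) hab
    have h1 : Tendsto (fun n => (1/tlo) * ‖d n‖) atTop (nhds ((1/tlo) * 0)) :=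
      htdn.const_mul _
    simpa using h1
  exact ⟨hsumd, htd, htab⟩
end
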